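/- Consider the primal-dual averaging conditional gradient (PDA-CndG) method: let θ_k > 0 satisfy θ_k/Θ_k = γ_k := 2/(k+1) where Θ_k := Σ_{i=1}^k θ_i (e.g., θ_k = k); given x₀ = y₀ ∈ X, for each k ≥ 1 set z_{k−1} := ((k−1)/(k+1)) y_{k−1} + (2/(k+1)) x_{k−1}, let x_k ∈ argmin_{x∈X} Σ_{i=1}^k θ_i f'(z_{i−1})(x), and let y_k ∈ X be any point with f(y_k) ≤ f((1−γ_k) y_{k−1} + γ_k x_k) (this covers both the stepsize α_k = 2/(k+1) and the exact line-search stepsize). Define Ψ_k(x) := Θ_k^{-1} Σ_{i=1}^k θ_i [f(z_{i−1}) + f'(z_{i−1})(x − z_{i−1})]. Then for every k ≥ 1: Ψ_k(x_k) ≤ min_{x∈X} f(x) ≤ f(y_k) and f(y_k) − Ψ_k(x_k) ≤ (2L/(k(k+1))) Σ_{i=1}^k ‖x_i − x_{i−1}‖² ≤ 2 L D_X²/(k+1); in particular f(y_k) − min_{x∈X} f(x) ≤ 2 L D_X²/(k+1). -/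

import Mathlib

open Filter Set Topology


lemma grad_ineq18 {E : Type*} [NormedAddCommGroup E] [NormedSpace ℝ E] {X : Set E}
    {f : E → ℝ} (hconv : ConvexOn ℝ X f) {z x : E} (hz : z ∈ X) (hx : x ∈ X)
    {φ : E →L[ℝ] ℝ} (hd : HasFDerivAt f φ z) : f z + φ (x - z) ≤ f x := by
  set g : ℝ → ℝ := fun t => f (z + t • (x - z)) with hgdef
  have h1 : HasDerivAt (fun t : ℝ => z + t • (x - z)) (x - z) 0 := by
    simpa using ((hasDerivAt_id (0:ℝ)).smul_const (x - z)).const_add z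
  have hg : HasDerivAt g (φ (x - z)) 0 := by
    have := (HasFDerivAt.comp_hasDerivAt (x := (0:ℝ)) (by simpa using hd) h1)
    exact this
  have hslope := hasDerivAt_iff_tendsto_slope.1 hg
  have hslope' : Tendsto (slope g 0) (𝓝[>] (0:ℝ)) (𝓝 (φ (x - z))) :=
    hslope.mono_left (nhdsWithin_mono _ (fun t ht => ne_of_gt ht))
  have hev : ∀ᶠ t in 𝓝[>] (0:ℝ), slope g 0 t ≤ f x - f z := by
    filter_upwards [Ioo_mem_nhdsGT_of_mem (by constructor <;> norm_num : (0:ℝ) ∈ Ico 0 1)]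
      with t ht
    have ht0 : 0 < t := ht.1
    have hcomb : f ((1 - t) • z + t • x) ≤ (1 - t) * f z + t * f x :=
      hconv.2 hz hx (by linarith [ht.2]) (le_of_lt ht0) (by ring)
    have heq : z + t • (x - z) = (1 - t) • z + t • x := by
      simp [smul_sub, sub_smul]; abel
    have hgt : g t ≤ (1 - t) * f z + t * f x := by
      rw [hgdef]; simp only; rw [heq]; exact hcomb
    have hg0 : g 0 = f z := by simp [hgdef]
    rw [slope_def_field, hg0, sub_zero, div_le_iff₀ ht0]
    nlinarith
  have := le_of_tendsto hslope' hev
  linarith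



set_option maxHeartbeats 1000000 in
/-- Convergence of the primal-dual averaging conditional gradient
(PDA-CndG) method: with `θ_k > 0`, `θ_k/Θ_k = γ_k = 2/(k+1)`,
`z_{k−1} = ((k−1)/(k+1)) y_{k−1} + (2/(k+1)) x_{k−1}`,
`x_k ∈ argmin_{x∈X} ∑_{i=1}^k θ_i f'(z_{i−1})(x)`, and
`f(y_k) ≤ f((1−γ_k) y_{k−1} + γ_k x_k)`, the lower model
`Ψ_k(x) = Θ_k^{-1} ∑_{i=1}^k θ_i [f(z_{i−1}) + f'(z_{i−1})(x − z_{i−1})]` satisfies, for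
every `k ≥ 1`: `Ψ_k(x_k) ≤ min_X f ≤ f(y_k)` and
`f(y_k) − Ψ_k(x_k) ≤ (2L/(k(k+1))) ∑_{i=1}^k ‖x_i − x_{i−1}‖² ≤ 2 L D_X²/(k+1)`;
in particular `f(y_k) − min_X f ≤ 2 L D_X²/(k+1)`. -/
theorem stmt18 {E : Type*} [NormedAddCommGroup E] [NormedSpace ℝ E] [FiniteDimensional ℝ E]
    (X : Set E) (hXcp : IsCompact X) (hXcv : Convex ℝ X) (hXne : X.Nonempty)
    (DX : ℝ) (hDX : IsGreatest {d : ℝ | ∃ a ∈ X, ∃ b ∈ X, d = ‖a - b‖} DX)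
    (f : E → ℝ) (f' : E → E →L[ℝ] ℝ) (L : ℝ) (hL : 0 < L)
    (hconv : ConvexOn ℝ X f)
    (hder : ∀ a ∈ X, HasFDerivAt f (f' a) a)
    (hsmooth : ∀ a ∈ X, ∀ b ∈ X, f b ≤ f a + f' a (b - a) + L / 2 * ‖b - a‖ ^ 2)
    (θ Θ : ℕ → ℝ) (hθ : ∀ k ≥ 1, 0 < θ k)
    (hΘ : ∀ k : ℕ, Θ k = ∑ i ∈ Finset.Icc 1 k, θ i)
    (γ : ℕ → ℝ) (hγ : ∀ k : ℕ, γ k = 2 / (k + 1))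
    (hθγ : ∀ k ≥ 1, θ k / Θ k = γ k)
    (x y z : ℕ → E)
    (hx0 : x 0 ∈ X) (hy0 : y 0 = x 0)
    (hz : ∀ k ≥ 1, z (k - 1) =
      (((k : ℝ) - 1) / ((k : ℝ) + 1)) • y (k - 1) + (2 / ((k : ℝ) + 1)) • x (k - 1))
    (hxk : ∀ k ≥ 1, x k ∈ X ∧ ∀ v ∈ X,
      (∑ i ∈ Finset.Icc 1 k, θ i * f' (z (i - 1)) (x k)) ≤
        ∑ i ∈ Finset.Icc 1 k, θ i * f' (z (i - 1)) v)
    (hyk : ∀ k ≥ 1, y k ∈ X ∧ f (y k) ≤ f ((1 - γ k) • y (k - 1) + γ k • x k))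
    (Ψ : ℕ → E → ℝ)
    (hΨ : ∀ k ≥ 1, ∀ v, Ψ k v =
      (Θ k)⁻¹ * ∑ i ∈ Finset.Icc 1 k, θ i * (f (z (i - 1)) + f' (z (i - 1)) (v - z (i - 1)))) :
    ∀ k ≥ 1,
      (∀ u ∈ X, Ψ k (x k) ≤ f u ∧ f (y k) - f u ≤ 2 * L * DX ^ 2 / (k + 1)) ∧
      f (y k) - Ψ k (x k) ≤
        2 * L / (k * (k + 1)) * ∑ i ∈ Finset.Icc 1 k, ‖x i - x (i - 1)‖ ^ 2 ∧
      2 * L / (k * (k + 1)) * ∑ i ∈ Finset.Icc 1 k, ‖x i - x (i - 1)‖ ^ 2 ≤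
        2 * L * DX ^ 2 / (k + 1) := by
  -- basic positivity and values of θ, Θ
  set c := θ 1 with hcdef
  have hc0 : 0 < c := hθ 1 le_rfl
  have hΘ0 : Θ 0 = 0 := by simp [hΘ]
  have hΘsucc : ∀ k : ℕ, Θ (k+1) = Θ k + θ (k+1) := by
    intro k
    rw [hΘ, hΘ, Finset.sum_Icc_succ_top (Nat.succ_le_succ (Nat.zero_le k))]
  have hΘpos : ∀ k : ℕ, 1 ≤ k → 0 < Θ k := by
    intro k hk
    rw [hΘ]
    exact Finset.sum_pos (fun i hi => hθ i (Finset.mem_Icc.1 hi).1)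
      (Finset.nonempty_Icc.2 hk)
  have hΘval : ∀ k : ℕ, 1 ≤ k → Θ k = c * k * (k + 1) / 2 := by
    intro k hk
    induction k, hk using Nat.le_induction with
    | base =>
      have : Θ 1 = θ 1 := by rw [hΘ]; simp
      rw [this]; push_cast; ring
    | succ k hk ih =>
      have hpos := hΘpos (k+1) (by omega)
      have h1 := hθγ (k+1) (by omega)
      rw [hγ] at h1
      have hθs : θ (k+1) = 2 / ((k:ℝ) + 2) * Θ (k+1) := by
        rw [div_eq_iff (ne_of_gt hpos)] at h1
        rw [h1]; push_cast; ring_nf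
      have hrec := hΘsucc k
      rw [ih, hθs] at hrec
      have hk0 : (1:ℝ) ≤ (k:ℝ) := by exact_mod_cast hk
      have hk2 : ((k:ℝ) + 2) ≠ 0 := by positivity
      have key : Θ (k+1) * (k:ℝ) = c * ((k:ℝ)+1) * ((k:ℝ)+2) / 2 * (k:ℝ) := by
        field_simp at hrec
        nlinarith [hrec]
      have hkne : ((k:ℝ)) ≠ 0 := by positivity
      have := mul_right_cancel₀ hkne key
      rw [this]; push_cast; ring
  have hθval : ∀ k : ℕ, 1 ≤ k → θ k = c * k := by
    intro k hk
    have hpos := hΘpos k hk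
    have h1 := hθγ k hk
    rw [hγ, div_eq_iff (ne_of_gt hpos)] at h1
    rw [h1, hΘval k hk]
    have : ((k:ℝ) + 1) ≠ 0 := by positivity
    field_simp
  -- membership facts
  have hxX : ∀ k, x k ∈ X := by
    intro k
    cases k with
    | zero => exact hx0
    | succ n => exact (hxk (n+1) (by omega)).1
  have hyX : ∀ k, y k ∈ X := by
    intro k
    cases k with
    | zero => rw [hy0]; exact hx0
    | succ n => exact (hyk (n+1) (by omega)).1
  have hzX : ∀ k, z k ∈ X := by
    intro k
    have hzk := hz (k+1) (by omega)
    simp only [Nat.add_sub_cancel] at hzk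
    rw [hzk]
    have e1 : ((k:ℝ) + 1 - 1) / ((k:ℝ) + 1 + 1) = (k:ℝ) / ((k:ℝ) + 2) := by ring_nf
    have e2 : (2:ℝ) / ((k:ℝ) + 1 + 1) = 2 / ((k:ℝ) + 2) := by ring_nf
    push_cast
    rw [e1, e2]
    refine hXcv (hyX k) (hxX k) (by positivity) (by positivity) ?_
    field_simp
  -- the aggregated lower model
  set ℓ : ℕ → E → ℝ := fun k v =>
    ∑ i ∈ Finset.Icc 1 k, θ i * (f (z (i-1)) + f' (z (i-1)) (v - z (i-1))) with hℓdef
  have hℓsplit : ∀ k v, ℓ k v =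
      (∑ i ∈ Finset.Icc 1 k, θ i * (f (z (i-1)) - f' (z (i-1)) (z (i-1)))) +
      ∑ i ∈ Finset.Icc 1 k, θ i * f' (z (i-1)) v := by
    intro k v
    rw [hℓdef, ← Finset.sum_add_distrib]
    refine Finset.sum_congr rfl fun i _ => ?_
    rw [map_sub]; ring
  have hℓmin : ∀ k, ∀ v ∈ X, ℓ k (x k) ≤ ℓ k v := by
    intro k v hv
    cases k with
    | zero => simp [hℓdef]
    | succ n =>
      rw [hℓsplit, hℓsplit]
      exact add_le_add le_rfl ((hxk (n+1) (by omega)).2 v hv)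
  -- Claim A by induction
  have claimA : ∀ k : ℕ, Θ k * f (y k) ≤ ℓ k (x k) +
      L/2 * ∑ i ∈ Finset.Icc 1 k, Θ i * (γ i)^2 * ‖x i - x (i-1)‖^2 := by
    intro k
    induction k with
    | zero => simp [hΘ0, hℓdef]
    | succ k ih =>
      have hK1 : 1 ≤ k + 1 := by omega
      have hγK : γ (k+1) = 2 / ((k:ℝ) + 2) := by rw [hγ]; push_cast; ring_nf
      have hγKpos : 0 < γ (k+1) := by rw [hγK]; positivity
      have hγKle : γ (k+1) ≤ 1 := by
        rw [hγK, div_le_one (by positivity)]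
        have : (0:ℝ) ≤ (k:ℝ) := Nat.cast_nonneg k
        linarith
      have hzK : z k = (1 - γ (k+1)) • y k + γ (k+1) • x k := by
        have h := hz (k+1) hK1
        simp only [Nat.add_sub_cancel] at h
        rw [h, hγK]
        have e1 : ((k+1:ℕ):ℝ) - 1 = (k:ℝ) := by push_cast; ring
        have e2 : ((k+1:ℕ):ℝ) + 1 = (k:ℝ) + 2 := by push_cast; ring
        rw [e1, e2]
        congr 1
        congr 1
        field_simp
        ring
      set w : E := (1 - γ (k+1)) • y k + γ (k+1) • x (k+1) with hwdef
      have hwX : w ∈ X :=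
        hXcv (hyX k) (hxX (k+1)) (by linarith) (le_of_lt hγKpos) (by ring)
      have hzkX : z k ∈ X := hzX k
      have hsm := hsmooth (z k) hzkX w hwX
      have hwz : w - z k = γ (k+1) • (x (k+1) - x k) := by
        rw [hwdef, hzK]
        module
      have hnorm : ‖w - z k‖^2 = γ (k+1)^2 * ‖x (k+1) - x k‖^2 := by
        rw [hwz, norm_smul, Real.norm_of_nonneg (le_of_lt hγKpos), mul_pow]
      have hdecomp : w - z k = (1 - γ (k+1)) • (y k - z k) + γ (k+1) • (x (k+1) - z k) := by
        rw [hwdef]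
        module
      have hlin : f' (z k) (w - z k) =
          (1 - γ (k+1)) * f' (z k) (y k - z k) + γ (k+1) * f' (z k) (x (k+1) - z k) := by
        rw [hdecomp, map_add, map_smul, map_smul]; rfl
      have hgrad : f (z k) + f' (z k) (y k - z k) ≤ f (y k) :=
        grad_ineq18 hconv hzkX (hyX k) (hder (z k) hzkX)
      have hcombine : f w ≤ (1 - γ (k+1)) * f (y k) +
          γ (k+1) * (f (z k) + f' (z k) (x (k+1) - z k)) +
          L/2 * (γ (k+1)^2 * ‖x (k+1) - x k‖^2) := by
        have h5 : (1 - γ (k+1)) * (f (z k) + f' (z k) (y k - z k)) ≤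
            (1 - γ (k+1)) * f (y k) :=
          mul_le_mul_of_nonneg_left hgrad (by linarith)
        rw [hlin, hnorm] at hsm
        nlinarith
      have hΘKpos := hΘpos (k+1) hK1
      have e2 : Θ (k+1) * γ (k+1) = θ (k+1) := by
        have h1 := hθγ (k+1) hK1
        rw [div_eq_iff (ne_of_gt hΘKpos)] at h1
        rw [h1]; ring
      have e1 : Θ (k+1) * (1 - γ (k+1)) = Θ k := by
        have h := hΘsucc k
        rw [mul_sub, mul_one, e2]
        linarith
      have hfyK : f (y (k+1)) ≤ f w := by
        have h := (hyk (k+1) hK1).2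
        simp only [Nat.add_sub_cancel] at h
        rw [hwdef]
        exact h
      have hB2 : Θ (k+1) * f w ≤ Θ k * f (y k) +
          θ (k+1) * (f (z k) + f' (z k) (x (k+1) - z k)) +
          L/2 * (Θ (k+1) * γ (k+1)^2 * ‖x (k+1) - x k‖^2) := by
        have h := mul_le_mul_of_nonneg_left hcombine (le_of_lt hΘKpos)
        calc Θ (k+1) * f w ≤ Θ (k+1) * ((1 - γ (k+1)) * f (y k) +
            γ (k+1) * (f (z k) + f' (z k) (x (k+1) - z k)) +
            L/2 * (γ (k+1)^2 * ‖x (k+1) - x k‖^2)) := h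
          _ = (Θ (k+1) * (1 - γ (k+1))) * f (y k) +
              (Θ (k+1) * γ (k+1)) * (f (z k) + f' (z k) (x (k+1) - z k)) +
              L/2 * (Θ (k+1) * γ (k+1)^2 * ‖x (k+1) - x k‖^2) := by ring
          _ = _ := by rw [e1, e2]
      have hmin : ℓ k (x k) ≤ ℓ k (x (k+1)) := hℓmin k (x (k+1)) (hxX (k+1))
      have hℓstep : ℓ (k+1) (x (k+1)) = ℓ k (x (k+1)) +
          θ (k+1) * (f (z k) + f' (z k) (x (k+1) - z k)) := by
        rw [hℓdef]
        simp only
        rw [Finset.sum_Icc_succ_top (Nat.succ_le_succ (Nat.zero_le k))]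
        simp [Nat.add_sub_cancel]
      have hSstep : ∑ i ∈ Finset.Icc 1 (k+1), Θ i * (γ i)^2 * ‖x i - x (i-1)‖^2 =
          (∑ i ∈ Finset.Icc 1 k, Θ i * (γ i)^2 * ‖x i - x (i-1)‖^2) +
          Θ (k+1) * (γ (k+1))^2 * ‖x (k+1) - x k‖^2 := by
        rw [Finset.sum_Icc_succ_top (Nat.succ_le_succ (Nat.zero_le k))]
        simp [Nat.add_sub_cancel]
      have hA : Θ (k+1) * f (y (k+1)) ≤ Θ (k+1) * f w :=
        mul_le_mul_of_nonneg_left hfyK (le_of_lt hΘKpos)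
      rw [hℓstep, hSstep]
      linarith
  -- final assembly
  intro k hk
  have hΘkpos := hΘpos k hk
  have hk0 : (1:ℝ) ≤ (k:ℝ) := by exact_mod_cast hk
  have hkpos : (0:ℝ) < (k:ℝ) := by linarith
  have hΨx : ∀ v, Ψ k v = (Θ k)⁻¹ * ℓ k v := by
    intro v; rw [hΨ k hk, hℓdef]
  have hnormDX : ∀ i : ℕ, ‖x i - x (i-1)‖ ≤ DX :=
    fun i => hDX.2 ⟨x i, hxX i, x (i-1), hxX _, rfl⟩
  -- part 2 : gap bound
  have part2 : f (y k) - Ψ k (x k) ≤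
      2*L/((k:ℝ)*((k:ℝ)+1)) * ∑ i ∈ Finset.Icc 1 k, ‖x i - x (i-1)‖^2 := by
    have hA := claimA k
    have h1 : f (y k) - Ψ k (x k) ≤
        (Θ k)⁻¹ * (L/2 * ∑ i ∈ Finset.Icc 1 k, Θ i * (γ i)^2 * ‖x i - x (i-1)‖^2) := by
      rw [hΨx]
      have h := mul_le_mul_of_nonneg_left hA (le_of_lt (inv_pos.2 hΘkpos))
      rw [← mul_assoc, inv_mul_cancel₀ (ne_of_gt hΘkpos), one_mul, mul_add] at h
      linarith
    have h2 : (Θ k)⁻¹ * (L/2 * ∑ i ∈ Finset.Icc 1 k, Θ i * (γ i)^2 * ‖x i - x (i-1)‖^2) ≤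
        ∑ i ∈ Finset.Icc 1 k, 2*L/((k:ℝ)*((k:ℝ)+1)) * ‖x i - x (i-1)‖^2 := by
      rw [show (Θ k)⁻¹ * (L/2 * ∑ i ∈ Finset.Icc 1 k, Θ i * (γ i)^2 * ‖x i - x (i-1)‖^2)
          = ∑ i ∈ Finset.Icc 1 k, (Θ k)⁻¹ * (L/2 * (Θ i * (γ i)^2 * ‖x i - x (i-1)‖^2))
        from by rw [Finset.mul_sum, Finset.mul_sum]]
      apply Finset.sum_le_sum
      intro i hi
      obtain ⟨hi1, hik⟩ := Finset.mem_Icc.1 hi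
      have hi0 : (1:ℝ) ≤ (i:ℝ) := by exact_mod_cast hi1
      have hN : (0:ℝ) ≤ ‖x i - x (i-1)‖^2 := by positivity
      have hcoef : (Θ k)⁻¹ * (L/2 * (Θ i * (γ i)^2)) ≤ 2*L/((k:ℝ)*((k:ℝ)+1)) := by
        have hE : (Θ k)⁻¹ * (L/2 * (Θ i * (γ i)^2)) =
            2*L*(i:ℝ)/(((i:ℝ)+1)*((k:ℝ)*((k:ℝ)+1))) := by
          rw [hΘval k hk, hΘval i hi1, hγ i]
          have p1 : ((i:ℝ)+1) ≠ 0 := by positivity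
          have p2 : ((k:ℝ)+1) ≠ 0 := by positivity
          have p3 : ((k:ℝ)) ≠ 0 := by positivity
          have p4 : c ≠ 0 := ne_of_gt hc0
          field_simp
        have q1 : (0:ℝ) < ((i:ℝ)+1)*((k:ℝ)*((k:ℝ)+1)) := by positivity
        have q2 : (0:ℝ) < (k:ℝ)*((k:ℝ)+1) := by positivity
        rw [hE, div_le_div_iff₀ q1 q2]
        nlinarith [hL.le, hkpos, q2]
      calc (Θ k)⁻¹ * (L/2 * (Θ i * (γ i)^2 * ‖x i - x (i-1)‖^2))
          = ((Θ k)⁻¹ * (L/2 * (Θ i * (γ i)^2))) * ‖x i - x (i-1)‖^2 := by ring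
        _ ≤ 2*L/((k:ℝ)*((k:ℝ)+1)) * ‖x i - x (i-1)‖^2 :=
            mul_le_mul_of_nonneg_right hcoef hN
    rw [← Finset.mul_sum] at h2
    linarith
  -- part 3 : diameter bound
  have part3 : 2*L/((k:ℝ)*((k:ℝ)+1)) * ∑ i ∈ Finset.Icc 1 k, ‖x i - x (i-1)‖^2 ≤
      2*L*DX^2/((k:ℝ)+1) := by
    have hsum : ∑ i ∈ Finset.Icc 1 k, ‖x i - x (i-1)‖^2 ≤ (k:ℝ) * DX^2 := by
      calc ∑ i ∈ Finset.Icc 1 k, ‖x i - x (i-1)‖^2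
          ≤ ∑ _i ∈ Finset.Icc 1 k, DX^2 :=
            Finset.sum_le_sum fun i _ => pow_le_pow_left₀ (norm_nonneg _) (hnormDX i) 2
        _ = (k:ℝ) * DX^2 := by
            rw [Finset.sum_const, Nat.card_Icc]
            simp [nsmul_eq_mul]
    have hco : (0:ℝ) < 2*L/((k:ℝ)*((k:ℝ)+1)) := by positivity
    calc 2*L/((k:ℝ)*((k:ℝ)+1)) * ∑ i ∈ Finset.Icc 1 k, ‖x i - x (i-1)‖^2
        ≤ 2*L/((k:ℝ)*((k:ℝ)+1)) * ((k:ℝ)*DX^2) := mul_le_mul_of_nonneg_left hsum hco.le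
      _ = 2*L*DX^2/((k:ℝ)+1) := by
          have p2 : ((k:ℝ)+1) ≠ 0 := by positivity
          have p3 : ((k:ℝ)) ≠ 0 := by positivity
          field_simp
  refine ⟨fun u hu => ?_, part2, part3⟩
  have hΨle : Ψ k (x k) ≤ f u := by
    have h1 : ℓ k u ≤ Θ k * f u := by
      rw [hΘ, hℓdef, Finset.sum_mul]
      apply Finset.sum_le_sum
      intro i hi
      have hgi : f (z (i-1)) + f' (z (i-1)) (u - z (i-1)) ≤ f u :=
        grad_ineq18 hconv (hzX (i-1)) hu (hder _ (hzX (i-1)))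
      exact mul_le_mul_of_nonneg_left hgi (le_of_lt (hθ i (Finset.mem_Icc.1 hi).1))
    have h2 : ℓ k (x k) ≤ Θ k * f u := le_trans (hℓmin k u hu) h1
    rw [hΨx]
    calc (Θ k)⁻¹ * ℓ k (x k) ≤ (Θ k)⁻¹ * (Θ k * f u) :=
        mul_le_mul_of_nonneg_left h2 (inv_pos.2 hΘkpos).le
      _ = f u := by field_simp
  exact ⟨hΨle, by linarith⟩
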